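/- arXiv:2105.06996 — 2 statements merged into one kernel-verified Lean document; each statement's English description precedes it below -/
import Mathlib

section
/- Let w be a finite word (list) over the two symbols {b, c} of odd length, and let A_w be the operator obtained from the diagonal matrix C' by applying, for each symbol of w read in order, the superoperator ∇ (for symbol b) or ∇_C (for symbol c). Then the uniform-state expectation value of A_w vanishes: ⟨A_w⟩₀ = 0. -/
open Matrix Asymptotics

noncomputable section

abbrev Bits (n : ℕ) := Fin n → Bool

/-- `x` with bit `j` flipped. -/
def flipBit {n : ℕ} (j : Fin n) (x : Bits n) : Bits n := Function.update x j (!x j)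

/-- The bit-flip operator `X_j`. -/
def Xop {n : ℕ} (j : Fin n) : Matrix (Bits n) (Bits n) ℂ :=
  fun x y => if y = flipBit j x then 1 else 0

/-- The transverse-field mixing Hamiltonian `B = ∑ⱼ Xⱼ`. -/
def Bop (n : ℕ) : Matrix (Bits n) (Bits n) ℂ := ∑ j : Fin n, Xop j

/-- The cost Hamiltonian: diagonal matrix with entries `c x`. -/
def Cop {n : ℕ} (c : Bits n → ℝ) : Matrix (Bits n) (Bits n) ℂ :=
  Matrix.diagonal fun x => (c x : ℂ)

/-- The gradient superoperator `∇A = [B, A]`. -/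
def gradB {n : ℕ} (A : Matrix (Bits n) (Bits n) ℂ) : Matrix (Bits n) (Bits n) ℂ :=
  Bop n * A - A * Bop n

/-- The gradient with respect to the cost Hamiltonian `∇_C A = [C, A]`. -/
def gradC {n : ℕ} (c : Bits n → ℝ) (A : Matrix (Bits n) (Bits n) ℂ) :
    Matrix (Bits n) (Bits n) ℂ :=
  Cop c * A - A * Cop c

/-- The uniform superposition state `|s⟩`, every entry `(2^n)^{-1/2}`. -/
def sVec (n : ℕ) : Bits n → ℂ := fun _ => ((Real.sqrt (2 ^ n))⁻¹ : ℝ)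

/-- Initial-state expectation value `⟨A⟩₀ = ⟨s|A|s⟩`. -/
def expect0 {n : ℕ} (A : Matrix (Bits n) (Bits n) ℂ) : ℂ :=
  star (sVec n) ⬝ᵥ (A *ᵥ sVec n)

/-- Partial cost difference `∂ⱼc(x) = c(x⁽ʲ⁾) − c(x)`. -/
def pd {n : ℕ} (c : Bits n → ℝ) (j : Fin n) (x : Bits n) : ℝ := c (flipBit j x) - c x

/-- Cost divergence `dc(x) = ∑ⱼ ∂ⱼc(x)`. -/
def dcFun {n : ℕ} (c : Bits n → ℝ) (x : Bits n) : ℝ := ∑ j : Fin n, pd c j x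

/-- The two symbols of the word: `b` stands for applying `∇ = [B,·]`,
`c` stands for applying `∇_C = [C,·]`. -/
inductive GradSym : Type
  | b : GradSym
  | c : GradSym

/-- Apply the superoperators corresponding to the symbols of `w`, read in order,
starting from the matrix `A`. -/
def applyWord {n : ℕ} (c : Bits n → ℝ) (w : List GradSym)
    (A : Matrix (Bits n) (Bits n) ℂ) : Matrix (Bits n) (Bits n) ℂ :=
  w.foldl (fun M s => match s with
    | GradSym.b => gradB M
    | GradSym.c => gradC c M) A


lemma flipBit_invol {n : ℕ} (j : Fin n) (x : Bits n) : flipBit j (flipBit j x) = x := by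
  funext i
  by_cases h : i = j
  · subst h; simp [flipBit]
  · simp [flipBit, Function.update_of_ne h]

lemma Xop_transpose {n : ℕ} (j : Fin n) : (Xop j)ᵀ = Xop j := by
  ext x y
  simp only [Matrix.transpose_apply, Xop]
  by_cases h : x = flipBit j y
  · have h2 : y = flipBit j x := by rw [h, flipBit_invol]
    rw [if_pos h, if_pos h2]
  · have h2 : y ≠ flipBit j x := fun hy => h (by rw [hy, flipBit_invol])
    rw [if_neg h, if_neg h2]

lemma Bop_transpose (n : ℕ) : (Bop n)ᵀ = Bop n := by
  simp [Bop, Matrix.transpose_sum, Xop_transpose]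

lemma Cop_transpose {n : ℕ} (c : Bits n → ℝ) : (Cop c)ᵀ = Cop c := by
  simp [Cop, Matrix.diagonal_transpose]

lemma gradB_transpose {n : ℕ} (A : Matrix (Bits n) (Bits n) ℂ) :
    (gradB A)ᵀ = -gradB Aᵀ := by
  simp only [gradB, Matrix.transpose_sub, Matrix.transpose_mul, Bop_transpose]
  noncomm_ring

lemma gradC_transpose {n : ℕ} (c : Bits n → ℝ) (A : Matrix (Bits n) (Bits n) ℂ) :
    (gradC c A)ᵀ = -gradC c Aᵀ := by
  simp only [gradC, Matrix.transpose_sub, Matrix.transpose_mul, Cop_transpose]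
  noncomm_ring

lemma gradB_neg {n : ℕ} (A : Matrix (Bits n) (Bits n) ℂ) : gradB (-A) = -gradB A := by
  simp only [gradB]; noncomm_ring

lemma gradC_neg {n : ℕ} (c : Bits n → ℝ) (A : Matrix (Bits n) (Bits n) ℂ) :
    gradC c (-A) = -gradC c A := by
  simp only [gradC]; noncomm_ring

lemma applyWord_neg {n : ℕ} (c : Bits n → ℝ) (w : List GradSym)
    (A : Matrix (Bits n) (Bits n) ℂ) : applyWord c w (-A) = -applyWord c w A := by
  induction w generalizing A with
  | nil => rfl
  | cons s w ih =>
    cases s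
    · show applyWord c w (gradB (-A)) = -applyWord c w (gradB A)
      rw [gradB_neg, ih]
    · show applyWord c w (gradC c (-A)) = -applyWord c w (gradC c A)
      rw [gradC_neg, ih]

lemma applyWord_transpose {n : ℕ} (c : Bits n → ℝ) (w : List GradSym)
    (A : Matrix (Bits n) (Bits n) ℂ) :
    (applyWord c w A)ᵀ = (-1 : ℂ) ^ w.length • applyWord c w Aᵀ := by
  induction w generalizing A with
  | nil => simp [applyWord]
  | cons s w ih =>
    cases s
    · show (applyWord c w (gradB A))ᵀ = (-1:ℂ)^(w.length+1) • applyWord c w (gradB Aᵀ)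
      rw [ih, gradB_transpose, applyWord_neg, pow_succ]
      simp [smul_smul]
    · show (applyWord c w (gradC c A))ᵀ = (-1:ℂ)^(w.length+1) • applyWord c w (gradC c Aᵀ)
      rw [ih, gradC_transpose, applyWord_neg, pow_succ]
      simp [smul_smul]

lemma expect0_transpose {n : ℕ} (A : Matrix (Bits n) (Bits n) ℂ) :
    expect0 Aᵀ = expect0 A := by
  have hs : star (sVec n) = sVec n := by
    funext x
    simp [sVec]
  simp only [expect0, hs]
  rw [Matrix.dotProduct_mulVec, Matrix.vecMul_transpose, dotProduct_comm]

theorem stmt1 (n : ℕ) (hn : 1 ≤ n) (c c' : Bits n → ℝ) (w : List GradSym)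
    (hw : Odd w.length) :
    expect0 (applyWord c w (Cop c')) = 0 := by
  have hT := applyWord_transpose c w (Cop c')
  rw [Cop_transpose, Odd.neg_one_pow hw] at hT
  have h1 : expect0 (applyWord c w (Cop c'))ᵀ = expect0 (applyWord c w (Cop c')) :=
    expect0_transpose _
  rw [hT] at h1
  have h2 : expect0 ((-1 : ℂ) • applyWord c w (Cop c')) =
      -expect0 (applyWord c w (Cop c')) := by
    simp [expect0, Matrix.smul_mulVec, Matrix.neg_mulVec, dotProduct_neg]
  rw [h2] at h1
  linear_combination -h1/2
end
end

section
/- (Mixing operator matrix elements.) For every real β and all bitstrings x, y, the matrix exponential of the transverse-field mixer satisfies (exp(−(iβ)•B)) x y = (cos β)^{n − d(x,y)} · (−i·sin β)^{d(x,y)}, where d(x,y) is the Hamming distance between x and y. -/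
open Matrix Asymptotics

noncomputable section

/-- Hamming distance between two bitstrings. -/
def hammingDist' {n : ℕ} (x y : Bits n) : ℕ :=
  (Finset.univ.filter fun j : Fin n => x j ≠ y j).card


set_option maxHeartbeats 1000000 in
lemma exp_smul_inv {𝔸 : Type*} [NormedRing 𝔸] [NormedAlgebra ℂ 𝔸] [CompleteSpace 𝔸]
    (A : 𝔸) (h : A * A = 1) (β : ℝ) :
    NormedSpace.exp ((-(Complex.I * (β : ℂ))) • A)
      = (Real.cos β : ℂ) • (1 : 𝔸) + (-Complex.I * (Real.sin β : ℂ)) • A := by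
  set c : ℂ := -(Complex.I * (β : ℂ)) with hc
  have hc2 : c ^ 2 = -((β : ℂ) ^ 2) := by
    rw [hc]; ring_nf; rw [Complex.I_sq]; ring
  have hceven : ∀ k : ℕ, c ^ (2 * k) = (-1) ^ k * (β : ℂ) ^ (2 * k) := by
    intro k
    rw [pow_mul, hc2, neg_pow, ← pow_mul]
  rw [NormedSpace.exp_eq_tsum ℂ]
  refine HasSum.tsum_eq ?_
  have heven : HasSum (fun k : ℕ => ((Nat.factorial (2 * k) : ℂ))⁻¹ • (c • A) ^ (2 * k))
      ((Real.cos β : ℂ) • (1 : 𝔸)) := by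
    have h1 := (Complex.hasSum_cos (β : ℂ)).smul_const (1 : 𝔸)
    rw [Complex.ofReal_cos]
    convert h1 using 2 with k
    have hApow : A ^ (2 * k) = 1 := by rw [pow_mul, sq, h, one_pow]
    have hfac : ((Nat.factorial (2 * k) : ℂ)) ≠ 0 :=
      Nat.cast_ne_zero.mpr (Nat.factorial_ne_zero _)
    rw [smul_pow, hApow, smul_smul, hceven k]
    congr 1
    field_simp
  have hodd : HasSum (fun k : ℕ => ((Nat.factorial (2 * k + 1) : ℂ))⁻¹ • (c • A) ^ (2 * k + 1))
      ((-Complex.I * (Real.sin β : ℂ)) • A) := by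
    have h1 := ((Complex.hasSum_sin (β : ℂ)).mul_left (-Complex.I)).smul_const A
    rw [Complex.ofReal_sin]
    convert h1 using 2 with k
    have hApow : A ^ (2 * k + 1) = A := by rw [pow_succ, pow_mul, sq, h, one_pow, one_mul]
    have hfac : ((Nat.factorial (2 * k + 1) : ℂ)) ≠ 0 :=
      Nat.cast_ne_zero.mpr (Nat.factorial_ne_zero _)
    have hcpow : c ^ (2 * k + 1) = -Complex.I * ((-1) ^ k * (β : ℂ) ^ (2 * k + 1)) := by
      rw [pow_succ, hceven k, hc]; ring
    rw [smul_pow, hApow, smul_smul, hcpow]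
    congr 1
    field_simp
  exact heven.even_add_odd hodd

variable {n : ℕ}

lemma flipBit_self (j : Fin n) (x : Bits n) : flipBit j x j = !x j := by
  simp [flipBit]

lemma flipBit_ne (j k : Fin n) (x : Bits n) (h : k ≠ j) : flipBit j x k = x k := by
  simp [flipBit, Function.update_of_ne h]

lemma flipBit_flipBit (j : Fin n) (x : Bits n) : flipBit j (flipBit j x) = x := by
  funext k
  by_cases h : k = j
  · subst h; simp [flipBit]
  · rw [flipBit_ne _ _ _ h, flipBit_ne _ _ _ h]

lemma flipBit_comm (j k : Fin n) (x : Bits n) :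
    flipBit j (flipBit k x) = flipBit k (flipBit j x) := by
  rcases eq_or_ne j k with rfl | hjk
  · rfl
  funext m
  by_cases hj : m = j
  · subst hj
    rw [flipBit_self, flipBit_ne k m x hjk, flipBit_ne k m (flipBit m x) hjk, flipBit_self]
  by_cases hk : m = k
  · subst hk
    rw [flipBit_ne j m (flipBit m x) hj, flipBit_self, flipBit_self, flipBit_ne j m x hj]
  · rw [flipBit_ne j m (flipBit k x) hj, flipBit_ne k m x hk, flipBit_ne k m (flipBit j x) hk,
      flipBit_ne j m x hj]

lemma Xop_mul (j k : Fin n) :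
    Xop j * Xop k = fun x y => if y = flipBit k (flipBit j x) then 1 else 0 := by
  ext x y
  rw [mul_apply]
  simp only [Xop, ite_mul, one_mul, zero_mul]
  rw [Finset.sum_ite_eq' Finset.univ (flipBit j x) (fun z => if y = flipBit k z then 1 else 0)]
  simp

lemma Xop_sq (j : Fin n) : Xop j * Xop j = 1 := by
  rw [Xop_mul]
  ext x y
  rw [flipBit_flipBit]
  simp [Matrix.one_apply, eq_comm]

lemma Xop_commute (j k : Fin n) : Commute (Xop j) (Xop k) := by
  unfold Commute SemiconjBy
  rw [Xop_mul, Xop_mul]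
  funext x y
  rw [flipBit_comm]

lemma M_apply (cc ss : ℂ) (a : Fin n) (x z : Bits n) :
    (cc • (1 : Matrix (Bits n) (Bits n) ℂ) + ss • Xop a) x z
      = (if z = x then cc else 0) + (if z = flipBit a x then ss else 0) := by
  simp only [Matrix.add_apply, Matrix.smul_apply, Matrix.one_apply, Xop, smul_eq_mul,
    mul_ite, mul_one, mul_zero]
  congr 1
  by_cases h : x = z
  · subst h; simp
  · simp [h, Ne.symm h]

lemma M_mul_apply (cc ss : ℂ) (a : Fin n) (P : Matrix (Bits n) (Bits n) ℂ) (x y : Bits n) :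
    ((cc • (1 : Matrix (Bits n) (Bits n) ℂ) + ss • Xop a) * P) x y
      = cc * P x y + ss * P (flipBit a x) y := by
  rw [Matrix.mul_apply]
  have hterm : ∀ z, (cc • (1 : Matrix (Bits n) (Bits n) ℂ) + ss • Xop a) x z * P z y
      = (if z = x then cc * P z y else 0) + (if z = flipBit a x then ss * P z y else 0) := by
    intro z
    rw [M_apply, add_mul, ite_mul, ite_mul]; simp
  rw [Finset.sum_congr rfl fun z _ => hterm z, Finset.sum_add_distrib,
    Finset.sum_ite_eq' Finset.univ x (fun z => cc * P z y),
    Finset.sum_ite_eq' Finset.univ (flipBit a x) (fun z => ss * P z y)]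
  simp

open scoped Classical in
lemma prodEntry (cc ss : ℂ) : ∀ (s : Finset (Fin n))
    (hcomm : (s : Set (Fin n)).Pairwise
      (Function.onFun Commute fun j => cc • (1 : Matrix (Bits n) (Bits n) ℂ) + ss • Xop j))
    (x y : Bits n),
      (s.noncommProd (fun j => cc • (1 : Matrix (Bits n) (Bits n) ℂ) + ss • Xop j) hcomm) x y
        = if (∀ j, j ∉ s → x j = y j) then ∏ j ∈ s, (if x j = y j then cc else ss) else 0 := by
  intro s
  induction s using Finset.induction_on with
  | empty =>
    intro hcomm x y
    rw [Finset.noncommProd_empty, Finset.prod_empty]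
    by_cases h : x = y
    · subst h
      rw [if_pos (fun j _ => rfl)]
      simp [Matrix.one_apply]
    · rw [if_neg (fun hh => h (funext fun j => hh j (Finset.notMem_empty j)))]
      simp [Matrix.one_apply, h]
  | @insert a s ha ih =>
    intro hcomm x y
    rw [Finset.noncommProd_insert_of_notMem _ _ _ _ ha, M_mul_apply, ih, ih]
    by_cases hxa : x a = y a
    · have hflip : ¬ (∀ j, j ∉ s → flipBit a x j = y j) := by
        intro hh
        have h2 := hh a ha
        rw [flipBit_self, ← hxa] at h2
        exact (Bool.not_ne_self (x a)) h2
      rw [if_neg hflip, mul_zero, add_zero]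
      by_cases hc : ∀ j, j ∉ insert a s → x j = y j
      · have hc1 : ∀ j, j ∉ s → x j = y j := by
          intro j hj
          by_cases hja : j = a
          · subst hja; exact hxa
          · exact hc j (by simp [hja, hj])
        rw [if_pos hc1, if_pos hc, Finset.prod_insert ha, if_pos hxa]
      · have hc1 : ¬ ∀ j, j ∉ s → x j = y j := by
          intro hh
          exact hc fun j hj => hh j (fun hjs => hj (Finset.mem_insert_of_mem hjs))
        rw [if_neg hc1, if_neg hc, mul_zero]
    · have hya : y a = !x a := by
        cases hx : x a <;> cases hy : y a <;> simp_all
      have hc1 : ¬ ∀ j, j ∉ s → x j = y j := by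
        intro hh
        exact hxa (hh a ha)
      rw [if_neg hc1, mul_zero, zero_add]
      by_cases hc : ∀ j, j ∉ insert a s → x j = y j
      · have hc2 : ∀ j, j ∉ s → flipBit a x j = y j := by
          intro j hj
          by_cases hja : j = a
          · subst hja; rw [flipBit_self, hya]
          · rw [flipBit_ne _ _ _ hja]
            exact hc j (by simp [hja, hj])
        rw [if_pos hc2, if_pos hc, Finset.prod_insert ha, if_neg hxa]
        congr 1
        refine Finset.prod_congr rfl fun j hj => ?_
        have hja : j ≠ a := fun he => ha (he ▸ hj)
        rw [flipBit_ne _ _ _ hja]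
      · have hc2 : ¬ ∀ j, j ∉ s → flipBit a x j = y j := by
          intro hh
          apply hc
          intro j hj
          have hja : j ≠ a := fun he => hj (he ▸ Finset.mem_insert_self a s)
          have hjs : j ∉ s := fun he => hj (Finset.mem_insert_of_mem he)
          have h3 := hh j hjs
          rwa [flipBit_ne _ _ _ hja] at h3
        rw [if_neg hc2, if_neg hc, mul_zero]

lemma M_commute (cc ss : ℂ) (j k : Fin n) :
    Commute (cc • (1 : Matrix (Bits n) (Bits n) ℂ) + ss • Xop j)
      (cc • (1 : Matrix (Bits n) (Bits n) ℂ) + ss • Xop k) := by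
  apply Commute.add_left
  · exact ((Commute.one_left _).smul_left cc)
  · apply Commute.add_right
    · exact ((Commute.one_right _).smul_right cc).smul_left ss
    · exact ((Xop_commute j k).smul_right ss).smul_left ss


theorem stmt14 (n : ℕ) (hn : 1 ≤ n) (β : ℝ) (x y : Bits n) :
    NormedSpace.exp ((-(Complex.I * (β : ℂ))) • Bop n) x y
      = ((Real.cos β : ℂ)) ^ (n - hammingDist' x y) *
          (-Complex.I * (Real.sin β : ℂ)) ^ hammingDist' x y := by
  classical
  set cc : ℂ := (Real.cos β : ℂ) with hcc
  set ss : ℂ := -Complex.I * (Real.sin β : ℂ) with hss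
  have hsmul : (-(Complex.I * (β : ℂ))) • Bop n
      = ∑ j : Fin n, (-(Complex.I * (β : ℂ))) • Xop j := by
    rw [Bop, Finset.smul_sum]
  have hcomm : ∀ j k : Fin n,
      Commute ((-(Complex.I * (β : ℂ))) • Xop j) ((-(Complex.I * (β : ℂ))) • Xop k) :=
    fun j k => ((Xop_commute j k).smul_left _).smul_right _
  rw [hsmul, Matrix.exp_sum_of_commute Finset.univ _ (@id (Set.Pairwise _ _) fun j _ k _ _ => hcomm j k)]
  have hexp : ∀ j : Fin n, NormedSpace.exp ((-(Complex.I * (β : ℂ))) • Xop j)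
      = cc • (1 : Matrix (Bits n) (Bits n) ℂ) + ss • Xop j := by
    intro j
    letI : SeminormedRing (Matrix (Bits n) (Bits n) ℂ) := Matrix.linftyOpSemiNormedRing
    letI : NormedRing (Matrix (Bits n) (Bits n) ℂ) := Matrix.linftyOpNormedRing
    letI : NormedAlgebra ℂ (Matrix (Bits n) (Bits n) ℂ) := Matrix.linftyOpNormedAlgebra
    exact exp_smul_inv (Xop j) (Xop_sq j) β
  rw [Finset.noncommProd_congr rfl (fun j _ => hexp j)
    (@id (Set.Pairwise _ _) fun j _ k _ _ => by
      simp only [Function.onFun, hexp j, hexp k]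
      exact M_commute cc ss j k)]
  refine (prodEntry cc ss Finset.univ _ x y).trans ?_
  rw [if_pos (fun j hj => absurd (Finset.mem_univ j) hj)]
  rw [← Finset.prod_filter_mul_prod_filter_not Finset.univ (fun j => x j = y j)]
  have hcard := Finset.card_filter_add_card_filter_not
    (s := (Finset.univ : Finset (Fin n))) (p := fun j => x j = y j)
  have hd : (Finset.univ.filter (fun j => ¬ (x j = y j))).card = hammingDist' x y := by
    rw [hammingDist']
  have hcardp : (Finset.univ.filter (fun j => x j = y j)).card = n - hammingDist' x y := by
    rw [Finset.card_univ, Fintype.card_fin] at hcard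
    omega
  have h1 : ∏ j ∈ Finset.univ.filter (fun j => x j = y j), (if x j = y j then cc else ss)
      = cc ^ (n - hammingDist' x y) := by
    rw [Finset.prod_congr rfl (fun j hj => if_pos (Finset.mem_filter.mp hj).2),
      Finset.prod_const, hcardp]
  have h2 : ∏ j ∈ Finset.univ.filter (fun j => ¬ (x j = y j)), (if x j = y j then cc else ss)
      = ss ^ hammingDist' x y := by
    rw [Finset.prod_congr rfl (fun j hj => if_neg (Finset.mem_filter.mp hj).2),
      Finset.prod_const, hd]
  rw [h1, h2]
end
end
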